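/- For k ≥ 2 and k₁, k₂ ≥ 1 with k₁ + k₂ = k, the probability that removing a uniformly random edge of a random recursive tree on k vertices leaves the root-subtree with k₁ vertices and the detached subtree with k₂ vertices equals k/(k₂(k₂+1)(k-1)). -/

import Mathlib

open scoped Classical

/-- A (parent function of a) recursive tree on vertices `{0, …, k-1}`, rooted at `0`:
each nonzero vertex points to a smaller parent, and the root points to itself. -/
def IsRecursiveParent {k : ℕ} (f : Fin k → Fin k) : Prop :=
  ∀ i : Fin k, (i.1 = 0 → f i = i) ∧ (i.1 ≠ 0 → (f i).1 < i.1)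

namespace MM

abbrev RP (k : ℕ) := {f : Fin k → Fin k // IsRecursiveParent f}

noncomputable def D {k : ℕ} (f : Fin k → Fin k) (e : Fin k) : Finset (Fin k) :=
  Finset.univ.filter (fun j => ∃ m : ℕ, f^[m] j = e)

noncomputable def N (k s : ℕ) : ℕ :=
  ∑ f : RP k, ∑ e : Fin k, if e.1 ≠ 0 ∧ (D f.1 e).card = s then 1 else 0

lemma apply_le {k : ℕ} {f : Fin k → Fin k} (hf : IsRecursiveParent f) (i : Fin k) :
    (f i).1 ≤ i.1 := by
  by_cases h : i.1 = 0
  · rw [(hf i).1 h]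
  · exact le_of_lt ((hf i).2 h)

lemma iterate_le {k : ℕ} {f : Fin k → Fin k} (hf : IsRecursiveParent f) (m : ℕ) (j : Fin k) :
    (f^[m] j).1 ≤ j.1 := by
  induction m generalizing j with
  | zero => simp
  | succ n ih =>
    rw [Function.iterate_succ_apply]
    exact le_trans (ih (f j)) (apply_le hf j)

lemma self_mem_D {k : ℕ} (f : Fin k → Fin k) (e : Fin k) : e ∈ D f e := by
  simp only [D, Finset.mem_filter, Finset.mem_univ, true_and]
  exact ⟨0, rfl⟩

/-- Extend a recursive parent function on `K+1` vertices by a new last vertex with parent `p`. -/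
noncomputable def ext {K : ℕ} (f : Fin (K+1) → Fin (K+1)) (p : Fin (K+1)) :
    Fin (K+2) → Fin (K+2) :=
  fun j => if h : j.1 < K+1 then (f ⟨j.1, h⟩).castSucc else p.castSucc

lemma ext_castSucc {K : ℕ} (f : Fin (K+1) → Fin (K+1)) (p : Fin (K+1)) (j : Fin (K+1)) :
    ext f p j.castSucc = (f j).castSucc := by
  simp [ext, j.isLt]

lemma ext_last {K : ℕ} (f : Fin (K+1) → Fin (K+1)) (p : Fin (K+1)) :
    ext f p (Fin.last (K+1)) = p.castSucc := by
  simp [ext]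

lemma ext_isRec {K : ℕ} {f : Fin (K+1) → Fin (K+1)} (hf : IsRecursiveParent f)
    (p : Fin (K+1)) : IsRecursiveParent (ext f p) := by
  intro i
  constructor
  · intro h0
    have hi : i = (0 : Fin (K+1)).castSucc := by
      apply Fin.ext; simpa using h0
    rw [hi, ext_castSucc]
    have : f 0 = 0 := (hf 0).1 rfl
    rw [this]
  · intro h0
    by_cases h : i.1 < K+1
    · have hi : i = Fin.castSucc ⟨i.1, h⟩ := by apply Fin.ext; simp
      rw [hi, ext_castSucc]
      simp only [Fin.coe_castSucc]
      exact (hf ⟨i.1, h⟩).2 h0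
    · have hi : i = Fin.last (K+1) := by
        apply Fin.ext; simp only [Fin.val_last]; omega
      rw [hi, ext_last]
      simp only [Fin.coe_castSucc, Fin.val_last]
      exact Nat.lt_succ_of_le (Nat.le_of_lt_succ p.isLt)

lemma ext_iterate {K : ℕ} (f : Fin (K+1) → Fin (K+1)) (p : Fin (K+1)) (m : ℕ)
    (j : Fin (K+1)) : (ext f p)^[m] j.castSucc = (f^[m] j).castSucc := by
  induction m generalizing j with
  | zero => simp
  | succ n ih =>
    rw [Function.iterate_succ_apply, Function.iterate_succ_apply, ext_castSucc]
    exact ih (f j)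

-- restriction of f : Fin (K+2) (recursive) to Fin (K+1)
noncomputable def res {K : ℕ} (F : Fin (K+2) → Fin (K+2)) (hF : IsRecursiveParent F) :
    Fin (K+1) → Fin (K+1) :=
  fun i => ⟨(F i.castSucc).1, by
    by_cases h : i.1 = 0
    · have : F i.castSucc = i.castSucc := (hF i.castSucc).1 (by simpa using h)
      rw [this]; simpa using i.isLt
    · exact lt_of_lt_of_le ((hF i.castSucc).2 (by simpa using h)) (by simpa using Nat.le_of_lt_succ i.isLt)⟩

lemma res_isRec {K : ℕ} (F : Fin (K+2) → Fin (K+2)) (hF : IsRecursiveParent F) :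
    IsRecursiveParent (res F hF) := by
  intro i
  constructor
  · intro h0
    have : F i.castSucc = i.castSucc := (hF i.castSucc).1 (by simpa using h0)
    apply Fin.ext
    simp [res, this]
  · intro h0
    exact (hF i.castSucc).2 (by simpa using h0)

noncomputable def splitEquiv (K : ℕ) : RP (K+2) ≃ RP (K+1) × Fin (K+1) where
  toFun F := (⟨res F.1 F.2, res_isRec F.1 F.2⟩,
    ⟨(F.1 (Fin.last (K+1))).1, (F.2 (Fin.last (K+1))).2 (by simp)⟩)
  invFun fp := ⟨ext fp.1.1 fp.2, ext_isRec fp.1.2 fp.2⟩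
  left_inv := by
    rintro ⟨F, hF⟩
    apply Subtype.ext
    funext j
    dsimp only
    by_cases h : j.1 < K + 1
    · have hj : j = Fin.castSucc ⟨j.1, h⟩ := by apply Fin.ext; simp
      rw [hj, ext_castSucc]
      apply Fin.ext
      simp [res]
    · have hj : j = Fin.last (K+1) := by apply Fin.ext; simp only [Fin.val_last]; omega
      rw [hj, ext_last]
      apply Fin.ext
      simp
  right_inv := by
    rintro ⟨⟨f, hf⟩, p⟩
    simp only [Prod.mk.injEq]
    constructor
    · apply Subtype.ext
      funext i
      apply Fin.ext
      simp [res, ext_castSucc]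
    · apply Fin.ext
      simp [ext_last]

lemma card_RP (k : ℕ) : Fintype.card (RP (k+1)) = k.factorial := by
  induction k with
  | zero =>
    show Fintype.card (RP 1) = 1
    rw [Fintype.card_eq_one_iff]
    refine ⟨⟨fun _ => 0, ?_⟩, ?_⟩
    · intro i
      constructor
      · intro _; apply Subsingleton.elim
      · intro h; exact absurd (Subsingleton.elim i 0 ▸ rfl : i.1 = 0) h
    · intro y
      apply Subtype.ext
      funext j
      apply Subsingleton.elim
  | succ n ih =>
    rw [Fintype.card_congr (splitEquiv n), Fintype.card_prod, ih, Fintype.card_fin,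
      Nat.factorial_succ, Nat.mul_comm]

lemma mem_D {k : ℕ} (f : Fin k → Fin k) (e j : Fin k) :
    j ∈ D f e ↔ ∃ m : ℕ, f^[m] j = e := by
  simp [D]

lemma D_ext_last_card {K : ℕ} {f : Fin (K+1) → Fin (K+1)} (hf : IsRecursiveParent f)
    (p : Fin (K+1)) : (D (ext f p) (Fin.last (K+1))).card = 1 := by
  have : D (ext f p) (Fin.last (K+1)) = {Fin.last (K+1)} := by
    ext j
    rw [mem_D, Finset.mem_singleton]
    constructor
    · rintro ⟨m, hm⟩
      by_contra hj
      have hjlt : j.1 < K + 1 := by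
        have := j.isLt
        have : j.1 ≠ K + 1 := fun h => hj (Fin.ext (by simp [h]))
        omega
      have := iterate_le (ext_isRec hf p) m j
      rw [hm] at this
      simp only [Fin.val_last] at this
      omega
    · rintro rfl
      exact ⟨0, rfl⟩
  rw [this, Finset.card_singleton]

lemma ext_iterate_last {K : ℕ} {f : Fin (K+1) → Fin (K+1)} (p : Fin (K+1)) (e : Fin (K+1)) :
    (∃ m : ℕ, (ext f p)^[m] (Fin.last (K+1)) = e.castSucc) ↔ ∃ m : ℕ, f^[m] p = e := by
  constructor
  · rintro ⟨m, hm⟩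
    cases m with
    | zero =>
      exfalso
      simp only [Function.iterate_zero, id_eq] at hm
      have := congrArg Fin.val hm
      simp only [Fin.val_last, Fin.coe_castSucc] at this
      have := e.isLt; omega
    | succ n =>
      rw [Function.iterate_succ_apply, ext_last, ext_iterate] at hm
      exact ⟨n, Fin.castSucc_injective _ hm⟩
  · rintro ⟨m, hm⟩
    refine ⟨m + 1, ?_⟩
    rw [Function.iterate_succ_apply, ext_last, ext_iterate, hm]

lemma D_ext_castSucc_card {K : ℕ} (f : Fin (K+1) → Fin (K+1)) (p : Fin (K+1))
    (e : Fin (K+1)) :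
    (D (ext f p) e.castSucc).card = (D f e).card + (if p ∈ D f e then 1 else 0) := by
  rw [D, D, Finset.card_filter, Finset.card_filter, Fin.sum_univ_castSucc]
  congr 1
  · apply Finset.sum_congr rfl
    intro j _
    congr 1
    apply propext
    constructor
    · rintro ⟨m, hm⟩
      rw [ext_iterate] at hm
      exact ⟨m, Fin.castSucc_injective _ hm⟩
    · rintro ⟨m, hm⟩
      exact ⟨m, by rw [ext_iterate, hm]⟩
  · simp only [D, Finset.mem_filter, Finset.mem_univ, true_and]
    by_cases h : ∃ m : ℕ, f^[m] p = e
    · rw [if_pos ((ext_iterate_last p e).mpr h), if_pos h]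
    · rw [if_neg (fun h' => h ((ext_iterate_last p e).mp h')), if_neg h]

lemma D_card_pos {k : ℕ} (f : Fin k → Fin k) (e : Fin k) : 1 ≤ (D f e).card :=
  Finset.card_pos.mpr ⟨e, self_mem_D f e⟩

lemma D_card_le {k : ℕ} (f : Fin k → Fin k) (e : Fin k) : (D f e).card ≤ k := by
  simpa using Finset.card_le_card (Finset.subset_univ (D f e))

lemma sum_ite_mem_card {α : Type*} [Fintype α] [DecidableEq α] (S : Finset α) (a b : ℕ) :
    (∑ p : α, if p ∈ S then a else b) = S.card * a + (Fintype.card α - S.card) * b := by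
  have h1 : Finset.univ.filter (fun x => x ∈ S) = S := by
    ext x; simp
  have h2 : Finset.univ.filter (fun x => ¬ x ∈ S) = Finset.univ \ S := by
    ext x; simp
  rw [Finset.sum_ite, Finset.sum_const, Finset.sum_const, smul_eq_mul, smul_eq_mul,
    h1, h2, Finset.card_sdiff_of_subset (Finset.subset_univ S), Finset.card_univ]

lemma N_one (s : ℕ) : N 1 s = 0 := by
  have : ∀ e : Fin 1, e.1 = 0 := fun e => by omega
  simp [N, this]

lemma N_rec (K t : ℕ) :
    N (K+2) (t+1) = (if t = 0 then Fintype.card (RP (K+2)) else 0)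
      + t * N (K+1) t + (K - t) * N (K+1) (t+1) := by
  have hcard : Fintype.card (RP (K+2)) = Fintype.card (RP (K+1)) * (K+1) := by
    rw [Fintype.card_congr (splitEquiv K), Fintype.card_prod, Fintype.card_fin]
  have step1 : N (K+2) (t+1)
      = ∑ fp : RP (K+1) × Fin (K+1),
          ∑ e : Fin (K+2),
            if e.1 ≠ 0 ∧ (D (ext fp.1.1 fp.2) e).card = t+1 then 1 else 0 := by
    rw [N, ← Equiv.sum_comp (splitEquiv K).symm]
    rfl
  have inner : ∀ (f : RP (K+1)) (p : Fin (K+1)),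
      (∑ e : Fin (K+2), if e.1 ≠ 0 ∧ (D (ext f.1 p) e).card = t+1 then 1 else 0)
      = (if t = 0 then 1 else 0)
        + ∑ i : Fin (K+1),
            if i.1 ≠ 0 ∧ (D f.1 i).card + (if p ∈ D f.1 i then 1 else 0) = t+1
            then 1 else 0 := by
    intro f p
    rw [Fin.sum_univ_castSucc, add_comm]
    congr 1
    · rw [D_ext_last_card f.2 p]
      simp only [Fin.val_last]
      by_cases h : t = 0
      · subst h; simp
      · rw [if_neg h, if_neg (fun hc => h (by omega : t = 0))]
    · apply Finset.sum_congr rfl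
      intro i _
      rw [D_ext_castSucc_card]
      simp only [Fin.coe_castSucc]
  have perF : ∀ f : RP (K+1),
      (∑ p : Fin (K+1),
        ∑ e : Fin (K+2), if e.1 ≠ 0 ∧ (D (ext f.1 p) e).card = t+1 then 1 else 0)
      = (K+1) * (if t = 0 then 1 else 0)
        + (t * (∑ i : Fin (K+1), if i.1 ≠ 0 ∧ (D f.1 i).card = t then 1 else 0)
          + (K - t) * (∑ i : Fin (K+1),
              if i.1 ≠ 0 ∧ (D f.1 i).card = t+1 then 1 else 0)) := by
    intro f
    have hpi : ∀ i : Fin (K+1),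
        (∑ p : Fin (K+1),
          if i.1 ≠ 0 ∧ (D f.1 i).card + (if p ∈ D f.1 i then 1 else 0) = t+1
          then 1 else 0)
        = t * (if i.1 ≠ 0 ∧ (D f.1 i).card = t then 1 else 0)
          + (K - t) * (if i.1 ≠ 0 ∧ (D f.1 i).card = t+1 then 1 else 0) := by
      intro i
      have hle := D_card_le f.1 i
      have hsplit : ∀ p : Fin (K+1),
          (if i.1 ≠ 0 ∧ (D f.1 i).card + (if p ∈ D f.1 i then 1 else 0) = t+1
           then 1 else 0)
          = if p ∈ D f.1 i
            then (if i.1 ≠ 0 ∧ (D f.1 i).card + 1 = t+1 then 1 else 0)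
            else (if i.1 ≠ 0 ∧ (D f.1 i).card = t+1 then 1 else 0) := by
        intro p
        by_cases hp : p ∈ D f.1 i <;> simp [hp]
      rw [Finset.sum_congr rfl (fun p _ => hsplit p)]
      simp only [sum_ite_mem_card, Fintype.card_fin]
      congr 1
      · by_cases h : i.1 ≠ 0 ∧ (D f.1 i).card + 1 = t + 1
        · have hc : (D f.1 i).card = t := by omega
          rw [if_pos h, if_pos ⟨h.1, hc⟩, hc]
        · have h2 : ¬ (i.1 ≠ 0 ∧ (D f.1 i).card = t) ∨ (D f.1 i).card = t := by tauto
          rw [if_neg h]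
          rcases h2 with h2 | h2
          · rw [if_neg h2]; simp
          · rw [if_neg (fun h3 : i.1 ≠ 0 ∧ (D f.1 i).card = t => h ⟨h3.1, by omega⟩)]
            simp
      · by_cases h : i.1 ≠ 0 ∧ (D f.1 i).card = t + 1
        · rw [if_pos h]
          have h2 : K + 1 - (D f.1 i).card = K - t := by omega
          rw [h2]
        · rw [if_neg h]
          simp
    calc
      (∑ p : Fin (K+1),
        ∑ e : Fin (K+2), if e.1 ≠ 0 ∧ (D (ext f.1 p) e).card = t+1 then 1 else 0)
        = ∑ p : Fin (K+1), ((if t = 0 then 1 else 0)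
            + ∑ i : Fin (K+1),
                if i.1 ≠ 0 ∧ (D f.1 i).card + (if p ∈ D f.1 i then 1 else 0) = t+1
                then 1 else 0) := Finset.sum_congr rfl (fun p _ => inner f p)
      _ = (K+1) * (if t = 0 then 1 else 0)
            + ∑ i : Fin (K+1), ∑ p : Fin (K+1),
                (if i.1 ≠ 0 ∧ (D f.1 i).card + (if p ∈ D f.1 i then 1 else 0) = t+1
                 then 1 else 0) := by
          rw [Finset.sum_add_distrib, Finset.sum_const, Finset.card_univ,
            Fintype.card_fin, smul_eq_mul, Finset.sum_comm]
      _ = _ := by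
          rw [Finset.sum_congr rfl (fun i _ => hpi i), Finset.sum_add_distrib,
            ← Finset.mul_sum, ← Finset.mul_sum]
  rw [step1, Fintype.sum_prod_type, Finset.sum_congr rfl (fun f _ => perF f),
    Finset.sum_add_distrib, Finset.sum_add_distrib, Finset.sum_const, Finset.card_univ,
    ← Finset.mul_sum, ← Finset.mul_sum, smul_eq_mul]
  show Fintype.card (RP (K+1)) * ((K+1) * (if t = 0 then 1 else 0))
      + (t * N (K+1) t + (K - t) * N (K+1) (t+1)) = _
  by_cases h : t = 0
  · subst h; rw [if_pos rfl, if_pos rfl, hcard]; ring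
  · rw [if_neg h, if_neg h]; ring

lemma card_RP' (k : ℕ) (hk : 1 ≤ k) : Fintype.card (RP k) = (k-1).factorial := by
  obtain ⟨n, rfl⟩ : ∃ n, k = n+1 := ⟨k-1, by omega⟩
  simpa using card_RP n

lemma N_formula : ∀ K t : ℕ, t ≤ K →
    N (K+2) (t+1) * ((t+1) * (t+2)) = (K+2).factorial := by
  intro K
  induction K with
  | zero =>
    intro t ht
    interval_cases t
    have h := N_rec 0 0
    norm_num at h
    rw [card_RP' 2 (by omega)] at h
    norm_num [N_one] at h
    norm_num [h, Nat.factorial]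
  | succ n ih =>
    intro t ht
    have hrec := N_rec (n+1) t
    simp only [show n+1+1 = n+2 from rfl, show n+1+2 = n+3 from rfl] at hrec ⊢
    have hfac : (n+3).factorial = (n+3) * (n+2).factorial := by
      rw [show n+3 = (n+2)+1 from rfl, Nat.factorial_succ]
    cases t with
    | zero =>
      have h1 := ih 0 (Nat.zero_le n)
      rw [hrec, if_pos rfl, card_RP' (n+3) (by omega),
        show n+3-1 = n+2 from by omega, hfac]
      simp only [Nat.sub_zero]
      zify at h1 ⊢
      linear_combination ((n : ℤ) + 1) * h1
    | succ u =>
      have h1 := ih u (by omega)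
      rw [hrec, if_neg (Nat.succ_ne_zero u), hfac]
      by_cases hu : u + 1 ≤ n
      · have h2 := ih (u+1) hu
        obtain ⟨v, rfl⟩ : ∃ v, n = u + 1 + v := ⟨n - (u+1), by omega⟩
        rw [show u+1+v+1 - (u+1) = v+1 from by omega]
        zify at h1 h2 ⊢
        linear_combination ((u : ℤ) + 3) * h1 + ((v : ℤ) + 1) * h2
      · have hun : u = n := by omega
        subst hun
        rw [show u+1-(u+1) = 0 from by omega]
        zify at h1 ⊢
        linear_combination ((u : ℤ) + 3) * h1

lemma card_E (K : ℕ) : Fintype.card {e : Fin (K+2) // e.1 ≠ 0} = K + 1 := by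
  rw [Fintype.card_subtype]
  have h : Finset.univ.filter (fun e : Fin (K+2) => e.1 ≠ 0)
      = Finset.univ.erase (0 : Fin (K+2)) := by
    ext e
    simp only [Finset.mem_filter, Finset.mem_univ, true_and, Finset.mem_erase, and_true,
      ne_eq, Fin.ext_iff, Fin.val_zero]
  rw [h, Finset.card_erase_of_mem (Finset.mem_univ _), Finset.card_univ, Fintype.card_fin]
  omega

lemma filter_card_eq (k s : ℕ) :
    (Finset.univ.filter
        (fun p : {f : Fin k → Fin k // IsRecursiveParent f} × {e : Fin k // e.1 ≠ 0} =>
          (Finset.univ.filter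
            (fun j : Fin k => ∃ m : ℕ, (p.1.1)^[m] j = p.2.1)).card = s)).card = N k s := by
  rw [Finset.card_filter, Fintype.sum_prod_type, N]
  simp only [D]
  apply Finset.sum_congr rfl
  intro f _
  rw [← Finset.sum_subtype (Finset.univ.filter (fun e : Fin k => e.1 ≠ 0))
      (fun e => by simp)
      (fun e => if (Finset.univ.filter
          (fun j : Fin k => ∃ m : ℕ, (f.1)^[m] j = e)).card = s then 1 else 0)]
  rw [Finset.sum_filter]
  apply Finset.sum_congr rfl
  intro e _
  by_cases h : e.1 ≠ 0
  · rw [if_pos h]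
    by_cases h2 : (Finset.univ.filter
        (fun j : Fin k => ∃ m : ℕ, (f.1)^[m] j = e)).card = s
    · rw [if_pos h2]; exact (if_pos ⟨h, h2⟩).symm
    · rw [if_neg h2]; exact (if_neg (fun hc => h2 hc.2)).symm
  · rw [if_neg h]; exact (if_neg (fun hc => h hc.1)).symm

end MM

/-- Meir–Moon formula: for a uniformly random recursive tree on `k` vertices together with
a uniformly random edge (identified with its lower endpoint `e ≠ root`), the probability
that the subtree detached by removing the edge has `k₂` vertices (so that the root
subtree has `k₁ = k - k₂` vertices) equals `k / (k₂ (k₂+1) (k-1))`. A vertex `j` is in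
the detached subtree iff iterating the parent map from `j` reaches `e`. -/


theorem stmt_9 (k k₁ k₂ : ℕ) (hk : 2 ≤ k) (h₁ : 1 ≤ k₁) (h₂ : 1 ≤ k₂)
    (hsum : k₁ + k₂ = k) :
    ((Finset.univ.filter
        (fun p : {f : Fin k → Fin k // IsRecursiveParent f} × {e : Fin k // e.1 ≠ 0} =>
          (Finset.univ.filter
            (fun j : Fin k => ∃ m : ℕ, (p.1.1)^[m] j = p.2.1)).card = k₂)).card : ℝ) /
      ((Finset.univ : Finset
        ({f : Fin k → Fin k // IsRecursiveParent f} × {e : Fin k // e.1 ≠ 0})).card : ℝ) =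
      (k : ℝ) / (k₂ * (k₂ + 1) * ((k : ℝ) - 1)) := by
  obtain ⟨K, rfl⟩ : ∃ K, k = K + 2 := ⟨k - 2, by omega⟩
  obtain ⟨t, rfl⟩ : ∃ t, k₂ = t + 1 := ⟨k₂ - 1, by omega⟩
  have htK : t ≤ K := by omega
  have hN := MM.N_formula K t htK
  have hf : (K+2).factorial = (K+2) * (K+1).factorial := rfl
  have h1 : ((MM.N (K+2) (t+1) : ℕ) : ℝ) * (((t:ℝ)+1) * ((t:ℝ)+2))
      = ((K:ℝ)+2) * ((K+1).factorial : ℝ) := by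
    exact_mod_cast hN.trans hf
  have hTot : ((Finset.univ : Finset
        ({f : Fin (K+2) → Fin (K+2) // IsRecursiveParent f} × {e : Fin (K+2) // e.1 ≠ 0})).card)
      = (K+1).factorial * (K+1) := by
    rw [Finset.card_univ, Fintype.card_prod, MM.card_RP' (K+2) (by omega), MM.card_E K,
      show K+2-1 = K+1 from by omega]
  rw [MM.filter_card_eq (K+2) (t+1), hTot]
  have hd1 : (((K+1).factorial * (K+1) : ℕ) : ℝ) ≠ 0 := by
    have : 0 < (K+1).factorial * (K+1) := Nat.mul_pos (K+1).factorial_pos (by omega)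
    exact_mod_cast this.ne'
  have hd2 : ((t+1 : ℕ) : ℝ) * (((t+1 : ℕ) : ℝ) + 1) * (((K+2 : ℕ) : ℝ) - 1) ≠ 0 := by
    push_cast
    ring_nf
    positivity
  rw [div_eq_div_iff hd1 hd2]
  push_cast
  linear_combination ((K:ℝ)+1) * h1
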